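/- Let ℓ ≥ 1 be an integer and assume X_{ℓ-1}⁺ = S. Fix an integer k with 0 < k ≤ ℓ, an integer m ≥ 1 with k − m ≥ 0, and an integer l with 0 < l ≤ k − m + 1. For 0 ≤ j ≤ l define H_j = X_{j-1}(X_j ∩ Y_{k-j}) and J_j = X_{j-1}(X_j ∩ Y_{k-j-m}). Then: (a) for 1 ≤ j ≤ l one has H_j = N(H_{j-1}) and J_j = N(J_{j-1}); (b) J_j is a normal subgroup of H_j for every 0 ≤ j ≤ l; and (c) for all 0 ≤ j, j' ≤ l there is a group isomorphism H_j / J_j ≅ H_{j'} / J_{j'}; in particular every H_j / J_j is isomorphic to (X₀ ∩ Y_k)/(X₀ ∩ Y_{k-m}). -/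

import Mathlib

open Pointwise

namespace GroupCodes

variable {S : Type*} [Group S]

/-- The subgroups `Xₙ` of the branch group `B ≤ S × S`: `X₀ = {b ∈ B : b⁻ = 1}` and
`X_{n+1} = {b ∈ B : b⁻ ∈ Xₙ⁺}` (here `b⁻ = b.1`, `b⁺ = b.2`, `U⁺ = snd '' U`). -/
def Xnat (B : Subgroup (S × S)) : ℕ → Subgroup (S × S)
  | 0 => B ⊓ (MonoidHom.fst S S).ker
  | n + 1 => B ⊓ (Subgroup.map (MonoidHom.snd S S) (Xnat B n)).comap (MonoidHom.fst S S)

/-- The subgroups `Yₙ` of the branch group `B ≤ S × S`: `Y₀ = {b ∈ B : b⁺ = 1}` and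
`Y_{n+1} = {b ∈ B : b⁺ ∈ Yₙ⁻}`. -/
def Ynat (B : Subgroup (S × S)) : ℕ → Subgroup (S × S)
  | 0 => B ⊓ (MonoidHom.snd S S).ker
  | n + 1 => B ⊓ (Subgroup.map (MonoidHom.fst S S) (Ynat B n)).comap (MonoidHom.snd S S)

/-- `X i` for an integer index `i`, trivial for `i < 0`. -/
def X (B : Subgroup (S × S)) (i : ℤ) : Subgroup (S × S) :=
  if i < 0 then ⊥ else Xnat B i.toNat

/-- `Y i` for an integer index `i`, trivial for `i < 0`. -/
def Y (B : Subgroup (S × S)) (i : ℤ) : Subgroup (S × S) :=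
  if i < 0 then ⊥ else Ynat B i.toNat

/-- The next-branch set `N(U) = {b ∈ B : b⁻ ∈ U⁺}`. -/
def N (B U : Subgroup (S × S)) : Subgroup (S × S) :=
  B ⊓ (Subgroup.map (MonoidHom.snd S S) U).comap (MonoidHom.fst S S)

/-- The previous-branch set `P(U) = {b ∈ B : b⁺ ∈ U⁻}`. -/
def P (B U : Subgroup (S × S)) : Subgroup (S × S) :=
  B ⊓ (Subgroup.map (MonoidHom.fst S S) U).comap (MonoidHom.snd S S)

/-- `IsQuotIso J H J' H'` says that `J` (viewed inside `H`) is normal in `H`, `J'` is normal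
in `H'`, and there is a group isomorphism `H / J ≅ H' / J'`. -/
def IsQuotIso {G₁ G₂ : Type*} [Group G₁] [Group G₂]
    (J H : Subgroup G₁) (J' H' : Subgroup G₂) : Prop :=
  (J.subgroupOf H).Normal ∧ (J'.subgroupOf H').Normal ∧
    ∀ [(J.subgroupOf H).Normal] [(J'.subgroupOf H').Normal],
      Nonempty ((H ⧸ J.subgroupOf H) ≃* (H' ⧸ J'.subgroupOf H'))

/-- `T` is a right transversal of `J` inside `H`: `T ⊆ H` and `T` meets every right coset
of `J` contained in `H` in exactly one element. -/
def IsRightTransversalIn {G : Type*} [Group G] (J H : Subgroup G) (T : Set G) : Prop :=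
  T ⊆ (H : Set G) ∧ ∀ h ∈ H, ∃! t, t ∈ T ∧ t * h⁻¹ ∈ J

/-- The group of trellis path segments `(b₀, …, bₙ)` with `b_j ∈ F j` and matching states
`b_j⁺ = b_{j+1}⁻`; a subgroup of the direct product `(S × S)^{n+1}`. -/
def chainSubgroup (n : ℕ) (F : ℤ → Subgroup (S × S)) : Subgroup (Fin (n + 1) → S × S) where
  carrier := {b | (∀ i : Fin (n + 1), b i ∈ F (i : ℤ)) ∧
    ∀ i : Fin n, (b i.castSucc).2 = (b i.succ).1}
  one_mem' := ⟨fun _ => one_mem _, fun _ => rfl⟩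
  mul_mem' := by
    rintro a b ⟨ha1, ha2⟩ ⟨hb1, hb2⟩
    refine ⟨fun i => mul_mem (ha1 i) (hb1 i), fun i => ?_⟩
    simp only [Pi.mul_apply, Prod.snd_mul, Prod.fst_mul, ha2 i, hb2 i]
  inv_mem' := by
    rintro a ⟨ha1, ha2⟩
    refine ⟨fun i => inv_mem (ha1 i), fun i => ?_⟩
    simp only [Pi.inv_apply, Prod.snd_inv, Prod.fst_inv, ha2 i]

/-- `U ⨝ N(U)`: the group of trellis path segments `(b, b')` of length two with `b ∈ U`,
`b' ∈ N(U)` and `b⁺ = b'⁻`; a subgroup of the direct product `(S × S) × (S × S)`. -/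
def JoinN (B U : Subgroup (S × S)) : Subgroup ((S × S) × (S × S)) where
  carrier := {p | p.1 ∈ U ∧ p.2 ∈ N B U ∧ p.1.2 = p.2.1}
  one_mem' := ⟨one_mem _, one_mem _, rfl⟩
  mul_mem' := by
    rintro a b ⟨ha1, ha2, ha3⟩ ⟨hb1, hb2, hb3⟩
    exact ⟨mul_mem ha1 hb1, mul_mem ha2 hb2, by
      simp only [Prod.fst_mul, Prod.snd_mul, ha3, hb3]⟩
  inv_mem' := by
    rintro a ⟨ha1, ha2, ha3⟩
    exact ⟨inv_mem ha1, inv_mem ha2, by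
      simp only [Prod.fst_inv, Prod.snd_inv, ha3]⟩

/-- `H_j = X_{j-1}(X_j ∩ Y_{k-j})` (as a subgroup, realized as the join). -/
def HH (B : Subgroup (S × S)) (k j : ℤ) : Subgroup (S × S) :=
  X B (j - 1) ⊔ (X B j ⊓ Y B (k - j))

/-- `J_j = X_{j-1}(X_j ∩ Y_{k-j-m})` (as a subgroup, realized as the join). -/
def JJ (B : Subgroup (S × S)) (k m j : ℤ) : Subgroup (S × S) :=
  X B (j - 1) ⊔ (X B j ⊓ Y B (k - j - m))

section Lemmas

variable {B : Subgroup (S × S)}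

-- membership lemmas
lemma mem_N {U : Subgroup (S × S)} {b : S × S} :
    b ∈ N B U ↔ b ∈ B ∧ ∃ u ∈ U, u.2 = b.1 := by
  simp [N, Subgroup.mem_inf, Subgroup.mem_comap, Subgroup.mem_map]

lemma mem_Xnat_zero {b : S × S} : b ∈ Xnat B 0 ↔ b ∈ B ∧ b.1 = 1 := by
  simp [Xnat, Subgroup.mem_inf, MonoidHom.mem_ker, Subgroup.mem_prod, and_comm]

lemma mem_Xnat_succ {n : ℕ} {b : S × S} :
    b ∈ Xnat B (n + 1) ↔ b ∈ B ∧ ∃ c ∈ Xnat B n, c.2 = b.1 := by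
  simp [Xnat, Subgroup.mem_inf, Subgroup.mem_comap, Subgroup.mem_map]

lemma mem_Ynat_zero {b : S × S} : b ∈ Ynat B 0 ↔ b ∈ B ∧ b.2 = 1 := by
  simp [Ynat, Subgroup.mem_inf, MonoidHom.mem_ker, Subgroup.mem_prod, and_comm]

lemma mem_Ynat_succ {n : ℕ} {b : S × S} :
    b ∈ Ynat B (n + 1) ↔ b ∈ B ∧ ∃ c ∈ Ynat B n, c.1 = b.2 := by
  simp [Ynat, Subgroup.mem_inf, Subgroup.mem_comap, Subgroup.mem_map]

lemma N_Xnat (n : ℕ) : N B (Xnat B n) = Xnat B (n + 1) := rfl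

lemma Xnat_le_B (n : ℕ) : Xnat B n ≤ B := by cases n <;> exact inf_le_left

lemma Ynat_le_B (n : ℕ) : Ynat B n ≤ B := by cases n <;> exact inf_le_left

lemma Xnat_mono : Monotone (Xnat B) := by
  have h : ∀ n, Xnat B n ≤ Xnat B (n + 1) := by
    intro n
    induction n with
    | zero =>
      intro b hb
      obtain ⟨hb1, hb2⟩ := mem_Xnat_zero.mp hb
      exact mem_Xnat_succ.mpr ⟨hb1, 1, one_mem _, hb2.symm⟩
    | succ n ih =>
      intro b hb
      obtain ⟨hb1, c, hc, hcb⟩ := mem_Xnat_succ.mp hb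
      exact mem_Xnat_succ.mpr ⟨hb1, c, ih hc, hcb⟩
  exact monotone_nat_of_le_succ h

lemma Ynat_mono : Monotone (Ynat B) := by
  have h : ∀ n, Ynat B n ≤ Ynat B (n + 1) := by
    intro n
    induction n with
    | zero =>
      intro b hb
      obtain ⟨hb1, hb2⟩ := mem_Ynat_zero.mp hb
      exact mem_Ynat_succ.mpr ⟨hb1, 1, one_mem _, hb2.symm⟩
    | succ n ih =>
      intro b hb
      obtain ⟨hb1, c, hc, hcb⟩ := mem_Ynat_succ.mp hb
      exact mem_Ynat_succ.mpr ⟨hb1, c, ih hc, hcb⟩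
  exact monotone_nat_of_le_succ h

lemma exists_fst (hB1 : Subgroup.map (MonoidHom.fst S S) B = ⊤) (s : S) :
    ∃ b ∈ B, b.1 = s := by
  have : s ∈ Subgroup.map (MonoidHom.fst S S) B := by rw [hB1]; trivial
  simpa [Subgroup.mem_map] using this

lemma exists_snd (hB2 : Subgroup.map (MonoidHom.snd S S) B = ⊤) (s : S) :
    ∃ b ∈ B, b.2 = s := by
  have : s ∈ Subgroup.map (MonoidHom.snd S S) B := by rw [hB2]; trivial
  simpa [Subgroup.mem_map] using this

-- conjugation stability
lemma conj_mem_Xnat (hB2 : Subgroup.map (MonoidHom.snd S S) B = ⊤) (n : ℕ) : ∀ b ∈ B, ∀ x ∈ Xnat B n, b * x * b⁻¹ ∈ Xnat B n := by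
  induction n with
  | zero =>
    intro b hb x hx
    obtain ⟨hx1, hx2⟩ := mem_Xnat_zero.mp hx
    refine mem_Xnat_zero.mpr ⟨mul_mem (mul_mem hb hx1) (inv_mem hb), ?_⟩
    simp [Prod.fst_mul, hx2]
  | succ n ih =>
    intro b hb x hx
    obtain ⟨hx1, c, hc, hcx⟩ := mem_Xnat_succ.mp hx
    obtain ⟨b', hb', hb'2⟩ := exists_snd hB2 b.1
    refine mem_Xnat_succ.mpr ⟨mul_mem (mul_mem hb hx1) (inv_mem hb),
      b' * c * b'⁻¹, ih b' hb' c hc, ?_⟩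
    simp [Prod.snd_mul, Prod.fst_mul, hb'2, hcx]

lemma conj_mem_Ynat (hB1 : Subgroup.map (MonoidHom.fst S S) B = ⊤) (n : ℕ) : ∀ b ∈ B, ∀ x ∈ Ynat B n, b * x * b⁻¹ ∈ Ynat B n := by
  induction n with
  | zero =>
    intro b hb x hx
    obtain ⟨hx1, hx2⟩ := mem_Ynat_zero.mp hx
    refine mem_Ynat_zero.mpr ⟨mul_mem (mul_mem hb hx1) (inv_mem hb), ?_⟩
    simp [Prod.snd_mul, hx2]
  | succ n ih =>
    intro b hb x hx
    obtain ⟨hx1, c, hc, hcx⟩ := mem_Ynat_succ.mp hx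
    obtain ⟨b', hb', hb'1⟩ := exists_fst hB1 b.2
    refine mem_Ynat_succ.mpr ⟨mul_mem (mul_mem hb hx1) (inv_mem hb),
      b' * c * b'⁻¹, ih b' hb' c hc, ?_⟩
    simp [Prod.snd_mul, Prod.fst_mul, hb'1, hcx]

-- induction principle for sup
lemma sup_ind {G : Type*} [Group G] {A C : Subgroup G} {p : G → Prop} {x : G}
    (hx : x ∈ A ⊔ C) (hA : ∀ a ∈ A, p a) (hC : ∀ c ∈ C, p c) (h1 : p 1)
    (hmul : ∀ a b, p a → p b → p (a * b)) (hinv : ∀ a, p a → p a⁻¹) : p x := by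
  rw [Subgroup.sup_eq_closure] at hx
  refine Subgroup.closure_induction ?_ h1 (fun a b _ _ => hmul a b) (fun a _ => hinv a) hx
  rintro y (hy | hy)
  · exact hA y hy
  · exact hC y hy

-- N distributes over sup
lemma N_sup (hB1 : Subgroup.map (MonoidHom.fst S S) B = ⊤) (U V : Subgroup (S × S)) : N B (U ⊔ V) = N B U ⊔ N B V := by
  refine le_antisymm ?_ (sup_le ?_ ?_)
  · intro b hb
    obtain ⟨hbB, u, hu, hub⟩ := mem_N.mp hb
    have main : ∀ u : S × S, u ∈ U ⊔ V → ∀ b ∈ B, u.2 = b.1 → b ∈ N B U ⊔ N B V := by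
      intro u hu
      refine sup_ind (p := fun u => ∀ b ∈ B, u.2 = b.1 → b ∈ N B U ⊔ N B V) hu ?_ ?_ ?_ ?_ ?_
      · intro a ha b hbB hab
        exact le_sup_left (α := Subgroup (S × S)) (mem_N.mpr ⟨hbB, a, ha, hab⟩)
      · intro a ha b hbB hab
        exact le_sup_right (α := Subgroup (S × S)) (mem_N.mpr ⟨hbB, a, ha, hab⟩)
      · intro b hbB hb1
        refine le_sup_left (α := Subgroup (S × S)) (mem_N.mpr ⟨hbB, 1, one_mem _, ?_⟩)
        simpa using hb1
      · intro a c pa pc b hbB hab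
        obtain ⟨b₁, hb₁, hb₁1⟩ := exists_fst hB1 a.2
        have h1 : b₁ ∈ N B U ⊔ N B V := pa b₁ hb₁ hb₁1.symm
        have h2 : b₁⁻¹ * b ∈ N B U ⊔ N B V := by
          refine pc (b₁⁻¹ * b) (mul_mem (inv_mem hb₁) hbB) ?_
          simp only [Prod.fst_mul, Prod.fst_inv, hb₁1, ← hab, Prod.snd_mul,
            inv_mul_cancel_left]
        simpa using mul_mem h1 h2
      · intro a pa b hbB hab
        have : b⁻¹ ∈ N B U ⊔ N B V := by
          refine pa b⁻¹ (inv_mem hbB) ?_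
          simp only [Prod.snd_inv, Prod.fst_inv] at hab ⊢
          rw [← hab, inv_inv]
        simpa using inv_mem this
    exact main u hu b hbB hub
  · intro b hb
    obtain ⟨hbB, u, hu, hub⟩ := mem_N.mp hb
    exact mem_N.mpr ⟨hbB, u, le_sup_left (α := Subgroup (S × S)) hu, hub⟩
  · intro b hb
    obtain ⟨hbB, u, hu, hub⟩ := mem_N.mp hb
    exact mem_N.mpr ⟨hbB, u, le_sup_right (α := Subgroup (S × S)) hu, hub⟩

lemma N_bot : N B (⊥ : Subgroup (S × S)) = Xnat B 0 := by
  simp only [N, Subgroup.map_bot]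
  rfl

lemma Xnat_zero_le_N (U : Subgroup (S × S)) : Xnat B 0 ≤ N B U := by
  intro b hb
  obtain ⟨hb1, hb2⟩ := mem_Xnat_zero.mp hb
  exact mem_N.mpr ⟨hb1, 1, one_mem _, hb2.symm⟩

-- key lemma
lemma N_Xnat_inf_Ynat_succ (a b : ℕ) :
    N B (Xnat B a ⊓ Ynat B (b + 1)) = Xnat B 0 ⊔ (Xnat B (a + 1) ⊓ Ynat B b) := by
  refine le_antisymm ?_ (sup_le (Xnat_zero_le_N _) ?_)
  · intro c hc
    obtain ⟨hcB, u, hu, huc⟩ := mem_N.mp hc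
    obtain ⟨huX, huY⟩ := Subgroup.mem_inf.mp hu
    obtain ⟨huB, d, hd, hdu⟩ := mem_Ynat_succ.mp huY
    have hdX : d ∈ Xnat B (a + 1) :=
      mem_Xnat_succ.mpr ⟨Ynat_le_B b hd, u, huX, by rw [hdu]⟩
    have h1 : c * d⁻¹ ∈ Xnat B 0 := by
      refine mem_Xnat_zero.mpr ⟨mul_mem hcB (inv_mem (Ynat_le_B b hd)), ?_⟩
      simp [Prod.fst_mul, Prod.fst_inv, ← huc, hdu]
    have h2 : d ∈ Xnat B (a + 1) ⊓ Ynat B b := Subgroup.mem_inf.mpr ⟨hdX, hd⟩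
    have : c * d⁻¹ * d ∈ Xnat B 0 ⊔ (Xnat B (a + 1) ⊓ Ynat B b) :=
      mul_mem (le_sup_left (α := Subgroup (S × S)) h1)
        (le_sup_right (α := Subgroup (S × S)) h2)
    simpa using this
  · intro d hd
    obtain ⟨hdX, hdY⟩ := Subgroup.mem_inf.mp hd
    obtain ⟨hdB, u, hu, hud⟩ := mem_Xnat_succ.mp hdX
    have huY : u ∈ Ynat B (b + 1) :=
      mem_Ynat_succ.mpr ⟨Xnat_le_B a hu, d, hdY, hud.symm⟩
    exact mem_N.mpr ⟨hdB, u, Subgroup.mem_inf.mpr ⟨hu, huY⟩, hud⟩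

lemma N_Xnat_inf_Ynat_zero (a : ℕ) :
    N B (Xnat B a ⊓ Ynat B 0) = Xnat B 0 := by
  refine le_antisymm ?_ (Xnat_zero_le_N _)
  intro c hc
  obtain ⟨hcB, u, hu, huc⟩ := mem_N.mp hc
  obtain ⟨huX, huY⟩ := Subgroup.mem_inf.mp hu
  obtain ⟨-, hu2⟩ := mem_Ynat_zero.mp huY
  exact mem_Xnat_zero.mpr ⟨hcB, by rw [← huc, hu2]⟩


-- ℤ-level lemmas
lemma X_neg {i : ℤ} (h : i < 0) : X B i = ⊥ := if_pos h

lemma X_natCast (n : ℕ) : X B (n : ℤ) = Xnat B n := by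
  rw [X, if_neg (by exact_mod_cast (not_lt.mpr (Int.natCast_nonneg n)))]
  simp

lemma Y_neg {i : ℤ} (h : i < 0) : Y B i = ⊥ := if_pos h

lemma Y_natCast (n : ℕ) : Y B (n : ℤ) = Ynat B n := by
  rw [Y, if_neg (by exact_mod_cast (not_lt.mpr (Int.natCast_nonneg n)))]
  simp

lemma X_mono : Monotone (X B) := by
  intro i j hij
  by_cases hi : i < 0
  · rw [X_neg hi]; exact bot_le
  · rw [X, if_neg hi, X, if_neg (by omega)]
    exact Xnat_mono (by omega)

lemma Y_mono : Monotone (Y B) := by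
  intro i j hij
  by_cases hi : i < 0
  · rw [Y_neg hi]; exact bot_le
  · rw [Y, if_neg hi, Y, if_neg (by omega)]
    exact Ynat_mono (by omega)

lemma X_le_B (i : ℤ) : X B i ≤ B := by
  by_cases hi : i < 0
  · rw [X_neg hi]; exact bot_le
  · rw [X, if_neg hi]; exact Xnat_le_B _

lemma Y_le_B (i : ℤ) : Y B i ≤ B := by
  by_cases hi : i < 0
  · rw [Y_neg hi]; exact bot_le
  · rw [Y, if_neg hi]; exact Ynat_le_B _

lemma mem_X_zero {b : S × S} : b ∈ X B (0 : ℤ) ↔ b ∈ B ∧ b.1 = 1 := by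
  rw [show ((0 : ℤ)) = ((0 : ℕ) : ℤ) from rfl, X_natCast]; exact mem_Xnat_zero

lemma mem_Y_zero {b : S × S} : b ∈ Y B (0 : ℤ) ↔ b ∈ B ∧ b.2 = 1 := by
  rw [show ((0 : ℤ)) = ((0 : ℕ) : ℤ) from rfl, Y_natCast]; exact mem_Ynat_zero

lemma conj_mem_X (hB2 : Subgroup.map (MonoidHom.snd S S) B = ⊤) (i : ℤ) :
    ∀ b ∈ B, ∀ x ∈ X B i, b * x * b⁻¹ ∈ X B i := by
  intro b hb x hx
  by_cases hi : i < 0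
  · rw [X_neg hi] at hx ⊢
    rw [Subgroup.mem_bot] at hx ⊢
    simp [hx]
  · rw [X, if_neg hi] at hx ⊢
    exact conj_mem_Xnat hB2 _ b hb x hx

lemma conj_mem_Y (hB1 : Subgroup.map (MonoidHom.fst S S) B = ⊤) (i : ℤ) :
    ∀ b ∈ B, ∀ x ∈ Y B i, b * x * b⁻¹ ∈ Y B i := by
  intro b hb x hx
  by_cases hi : i < 0
  · rw [Y_neg hi] at hx ⊢
    rw [Subgroup.mem_bot] at hx ⊢
    simp [hx]
  · rw [Y, if_neg hi] at hx ⊢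
    exact conj_mem_Ynat hB1 _ b hb x hx

lemma N_X {p : ℤ} (hp : 0 ≤ p) : N B (X B (p - 1)) = X B p := by
  obtain ⟨n, rfl⟩ := Int.eq_ofNat_of_zero_le hp
  cases n with
  | zero =>
    rw [show ((0 : ℕ) : ℤ) - 1 = -1 from rfl, X_neg (by norm_num), N_bot,
      show ((0 : ℕ) : ℤ) = ((0 : ℕ) : ℤ) from rfl, X_natCast]
  | succ n =>
    rw [show ((n + 1 : ℕ) : ℤ) - 1 = (n : ℤ) by push_cast; ring, X_natCast, X_natCast,
      N_Xnat]

lemma N_XY {p q : ℤ} (hp : 0 ≤ p) (hq : 1 ≤ q) :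
    N B (X B p ⊓ Y B q) = X B 0 ⊔ (X B (p + 1) ⊓ Y B (q - 1)) := by
  obtain ⟨a, rfl⟩ := Int.eq_ofNat_of_zero_le hp
  obtain ⟨c, hc⟩ := Int.eq_ofNat_of_zero_le (by omega : (0 : ℤ) ≤ q - 1)
  have hq' : q = ((c + 1 : ℕ) : ℤ) := by push_cast; omega
  subst hq'
  rw [show (a : ℤ) + 1 = ((a + 1 : ℕ) : ℤ) by push_cast; ring]
  rw [show ((c + 1 : ℕ) : ℤ) - 1 = (c : ℤ) by push_cast; ring]
  rw [X_natCast, Y_natCast, X_natCast, Y_natCast,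
    show ((0 : ℤ)) = ((0 : ℕ) : ℤ) from rfl, X_natCast]
  exact N_Xnat_inf_Ynat_succ a c

lemma N_XY0 {p : ℤ} (hp : 0 ≤ p) :
    N B (X B p ⊓ Y B 0) = X B 0 := by
  obtain ⟨a, rfl⟩ := Int.eq_ofNat_of_zero_le hp
  rw [show ((0 : ℤ)) = ((0 : ℕ) : ℤ) from rfl, X_natCast, Y_natCast, X_natCast]
  exact N_Xnat_inf_Ynat_zero a

lemma conj_mem_sup {A C : Subgroup (S × S)}
    (hA : ∀ b ∈ B, ∀ x ∈ A, b * x * b⁻¹ ∈ A)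
    (hC : ∀ b ∈ B, ∀ x ∈ C, b * x * b⁻¹ ∈ C) :
    ∀ b ∈ B, ∀ x ∈ A ⊔ C, b * x * b⁻¹ ∈ A ⊔ C := by
  intro b hb x hx
  refine sup_ind (p := fun x => b * x * b⁻¹ ∈ A ⊔ C) hx ?_ ?_ ?_ ?_ ?_
  · exact fun a ha => le_sup_left (α := Subgroup (S × S)) (hA b hb a ha)
  · exact fun c hc => le_sup_right (α := Subgroup (S × S)) (hC b hb c hc)
  · simpa using one_mem (A ⊔ C)
  · intro x y px py
    have := mul_mem px py
    simpa [mul_assoc] using this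
  · intro x px
    have := inv_mem px
    simpa [mul_assoc] using this

lemma subgroupOf_normal_of_conj {G : Type*} [Group G] {J H : Subgroup G}
    (h : ∀ x ∈ H, ∀ a ∈ J, x * a * x⁻¹ ∈ J) : (J.subgroupOf H).Normal := by
  constructor
  intro n hn g
  rw [Subgroup.mem_subgroupOf] at hn ⊢
  simpa using h (g : G) g.2 (n : G) hn

-- The quotient isomorphism machinery
lemma quot_iso_aux (hB1 : Subgroup.map (MonoidHom.fst S S) B = ⊤)
    (hB2 : Subgroup.map (MonoidHom.snd S S) B = ⊤)
    (H J : Subgroup (S × S)) (hJH : J ≤ H) (hHB : H ≤ B)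
    (hconjJ : ∀ b ∈ B, ∀ u ∈ J, b * u * b⁻¹ ∈ J)
    (hker : ∀ h ∈ H, ∀ u ∈ J, h.2 = u.2 → h ∈ J)
    [i1 : ((N B J).subgroupOf (N B H)).Normal] [i2 : (J.subgroupOf H).Normal] :
    Nonempty ((↥(N B H) ⧸ (N B J).subgroupOf (N B H)) ≃* (↥H ⧸ J.subgroupOf H)) := by
  set Hs := Subgroup.map (MonoidHom.snd S S) H with hHs
  set Js := Subgroup.map (MonoidHom.snd S S) J with hJs
  haveI : (Js.subgroupOf Hs).Normal := by
    refine subgroupOf_normal_of_conj ?_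
    intro x hx t ht
    obtain ⟨h, hh, rfl⟩ := Subgroup.mem_map.mp hx
    obtain ⟨u, hu, rfl⟩ := Subgroup.mem_map.mp ht
    exact Subgroup.mem_map.mpr ⟨h * u * h⁻¹, hconjJ h (hHB hh) u hu, rfl⟩
  -- f1 : N B H →* Hs via first coordinate
  have hmem1 : ∀ x : ↥(N B H), (x : S × S).1 ∈ Hs := by
    intro x
    obtain ⟨-, u, hu, hux⟩ := mem_N.mp x.2
    exact Subgroup.mem_map.mpr ⟨u, hu, hux⟩
  let f1 : ↥(N B H) →* ↥Hs :=
    MonoidHom.codRestrict ((MonoidHom.fst S S).comp (N B H).subtype) Hs hmem1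
  let F1 := (QuotientGroup.mk' (Js.subgroupOf Hs)).comp f1
  have hF1surj : Function.Surjective F1 := by
    refine (QuotientGroup.mk'_surjective _).comp ?_
    rintro ⟨t, ht⟩
    obtain ⟨u, hu, rfl⟩ := Subgroup.mem_map.mp ht
    obtain ⟨b, hb, hb1⟩ := exists_fst hB1 u.2
    exact ⟨⟨b, mem_N.mpr ⟨hb, u, hu, hb1.symm⟩⟩, Subtype.ext hb1⟩
  have hF1ker : F1.ker = (N B J).subgroupOf (N B H) := by
    ext x
    rw [Subgroup.mem_subgroupOf]
    simp only [F1, MonoidHom.mem_ker, MonoidHom.comp_apply, QuotientGroup.mk'_apply,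
      QuotientGroup.eq_one_iff, Subgroup.mem_subgroupOf]
    constructor
    · intro hx
      obtain ⟨u, hu, hux⟩ := Subgroup.mem_map.mp hx
      exact mem_N.mpr ⟨(mem_N.mp x.2).1, u, hu, hux⟩
    · intro hx
      obtain ⟨-, u, hu, hux⟩ := mem_N.mp hx
      exact Subgroup.mem_map.mpr ⟨u, hu, hux⟩
  -- f2 : H →* Hs via second coordinate
  let f2 : ↥H →* ↥Hs := (MonoidHom.snd S S).subgroupMap H
  let F2 := (QuotientGroup.mk' (Js.subgroupOf Hs)).comp f2
  have hF2surj : Function.Surjective F2 := by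
    refine (QuotientGroup.mk'_surjective _).comp ?_
    rintro ⟨t, ht⟩
    obtain ⟨u, hu, rfl⟩ := Subgroup.mem_map.mp ht
    exact ⟨⟨u, hu⟩, rfl⟩
  have hF2ker : F2.ker = J.subgroupOf H := by
    ext x
    rw [Subgroup.mem_subgroupOf]
    simp only [F2, MonoidHom.mem_ker, MonoidHom.comp_apply, QuotientGroup.mk'_apply,
      QuotientGroup.eq_one_iff, Subgroup.mem_subgroupOf]
    constructor
    · intro hx
      obtain ⟨u, hu, hux⟩ := Subgroup.mem_map.mp hx
      exact hker (x : S × S) x.2 u hu hux.symm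
    · intro hx
      exact Subgroup.mem_map.mpr ⟨(x : S × S), hx, rfl⟩
  have e1 := QuotientGroup.quotientKerEquivOfSurjective F1 hF1surj
  have e2 := QuotientGroup.quotientKerEquivOfSurjective F2 hF2surj
  exact ⟨((QuotientGroup.quotientMulEquivOfEq hF1ker.symm).trans e1).trans
    (((QuotientGroup.quotientMulEquivOfEq hF2ker.symm).trans e2).symm)⟩

lemma quot_iso_aux' (hB1 : Subgroup.map (MonoidHom.fst S S) B = ⊤)
    (hB2 : Subgroup.map (MonoidHom.snd S S) B = ⊤)
    (H J H' J' : Subgroup (S × S)) (hJH : J ≤ H) (hHB : H ≤ B)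
    (hconjJ : ∀ b ∈ B, ∀ u ∈ J, b * u * b⁻¹ ∈ J)
    (hker : ∀ h ∈ H, ∀ u ∈ J, h.2 = u.2 → h ∈ J)
    (hH' : H' = N B H) (hJ' : J' = N B J)
    [i1 : (J'.subgroupOf H').Normal] [i2 : (J.subgroupOf H).Normal] :
    Nonempty ((↥H' ⧸ J'.subgroupOf H') ≃* (↥H ⧸ J.subgroupOf H)) := by
  subst hH' hJ'
  exact quot_iso_aux hB1 hB2 H J hJH hHB hconjJ hker

end Lemmas

/-- for the rows `H_j, J_j` of the controllable Schreier matrix: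
(a) `H_j = N(H_{j-1})`, `J_j = N(J_{j-1})`; (b) `J_j ⊴ H_j`; (c) all quotients `H_j / J_j`
are mutually isomorphic, and isomorphic to `(X₀ ∩ Y_k)/(X₀ ∩ Y_{k-m})`. -/
theorem schreier_rows_iso
    (B : Subgroup (S × S))
    (hB1 : Subgroup.map (MonoidHom.fst S S) B = ⊤)
    (hB2 : Subgroup.map (MonoidHom.snd S S) B = ⊤)
    (ℓ k m l : ℤ) (hℓ : 1 ≤ ℓ)
    (hctl : Subgroup.map (MonoidHom.snd S S) (X B (ℓ - 1)) = ⊤)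
    (hk0 : 0 < k) (hkℓ : k ≤ ℓ)
    (hm : 1 ≤ m) (hkm : 0 ≤ k - m)
    (hl0 : 0 < l) (hl : l ≤ k - m + 1) :
    (∀ j : ℤ, 1 ≤ j → j ≤ l →
      HH B k j = N B (HH B k (j - 1)) ∧ JJ B k m j = N B (JJ B k m (j - 1))) ∧
    (∀ j : ℤ, 0 ≤ j → j ≤ l →
      JJ B k m j ≤ HH B k j ∧ ((JJ B k m j).subgroupOf (HH B k j)).Normal) ∧
    (∀ j j' : ℤ, 0 ≤ j → j ≤ l → 0 ≤ j' → j' ≤ l →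
      IsQuotIso (JJ B k m j) (HH B k j) (JJ B k m j') (HH B k j')) ∧
    (∀ j : ℤ, 0 ≤ j → j ≤ l →
      IsQuotIso (JJ B k m j) (HH B k j) (X B 0 ⊓ Y B (k - m)) (X B 0 ⊓ Y B k)) := by
  have hHB : ∀ j : ℤ, HH B k j ≤ B := fun j =>
    sup_le (X_le_B _) (le_trans inf_le_left (X_le_B _))
  have hJH : ∀ j : ℤ, JJ B k m j ≤ HH B k j := fun j =>
    sup_le le_sup_left (le_trans (inf_le_inf_left _ (Y_mono (by omega))) le_sup_right)
  have hconjJ : ∀ j : ℤ, ∀ b ∈ B, ∀ u ∈ JJ B k m j, b * u * b⁻¹ ∈ JJ B k m j := by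
    intro j
    refine conj_mem_sup (conj_mem_X hB2 _) ?_
    intro b hb x hx
    exact Subgroup.mem_inf.mpr ⟨conj_mem_X hB2 _ b hb _ (Subgroup.mem_inf.mp hx).1,
      conj_mem_Y hB1 _ b hb _ (Subgroup.mem_inf.mp hx).2⟩
  have hnorm : ∀ j : ℤ, ((JJ B k m j).subgroupOf (HH B k j)).Normal := fun j =>
    subgroupOf_normal_of_conj (fun x hx a ha => hconjJ j x (hHB j hx) a ha)
  have parta : ∀ j : ℤ, 1 ≤ j → j ≤ l →
      HH B k j = N B (HH B k (j - 1)) ∧ JJ B k m j = N B (JJ B k m (j - 1)) := by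
    intro j hj1 hjl
    have hp : (0 : ℤ) ≤ j - 1 := by omega
    have habs : X B 0 ≤ X B (j - 1) := X_mono hp
    constructor
    · simp only [HH]
      rw [N_sup hB1, N_X hp, N_XY hp (by omega : 1 ≤ k - (j - 1))]
      rw [show j - 1 + 1 = j by ring, show k - (j - 1) - 1 = k - j by ring]
      rw [← sup_assoc, sup_eq_left.mpr habs]
    · simp only [JJ]
      by_cases hq : 1 ≤ k - (j - 1) - m
      · rw [N_sup hB1, N_X hp, N_XY hp hq]
        rw [show j - 1 + 1 = j by ring, show k - (j - 1) - m - 1 = k - j - m by ring]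
        rw [← sup_assoc, sup_eq_left.mpr habs]
      · rw [N_sup hB1, N_X hp, show k - (j - 1) - m = 0 by omega, N_XY0 hp]
        rw [Y_neg (show k - j - m < 0 by omega), inf_bot_eq, sup_bot_eq,
          sup_eq_left.mpr habs]
  have hker : ∀ j : ℤ, 0 ≤ j → j + m ≤ k →
      ∀ h ∈ HH B k j, ∀ u ∈ JJ B k m j, h.2 = u.2 → h ∈ JJ B k m j := by
    intro j hj0 hjk h hh u hu hhu
    have hmem : h * u⁻¹ ∈ HH B k j := mul_mem hh (inv_mem (hJH j hu))
    have h1 : h * u⁻¹ ∈ X B j ⊓ Y B (k - j - m) := by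
      refine Subgroup.mem_inf.mpr ⟨?_, ?_⟩
      · exact (sup_le (X_mono (by omega)) inf_le_left : HH B k j ≤ X B j) hmem
      · refine Y_mono (by omega : (0 : ℤ) ≤ k - j - m) (mem_Y_zero.mpr ⟨hHB j hmem, ?_⟩)
        simp [Prod.snd_mul, Prod.snd_inv, hhu]
    have h2 : h * u⁻¹ * u ∈ JJ B k m j :=
      mul_mem (le_sup_right (α := Subgroup (S × S)) h1) hu
    simpa using h2
  have key : ∀ j : ℤ, 0 ≤ j → j ≤ l →
      Nonempty ((↥(HH B k j) ⧸ (JJ B k m j).subgroupOf (HH B k j)) ≃*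
        (↥(HH B k 0) ⧸ (JJ B k m 0).subgroupOf (HH B k 0))) := by
    refine fun j hj0 => Int.le_induction
      (motive := fun j _ => j ≤ l → Nonempty ((↥(HH B k j) ⧸ (JJ B k m j).subgroupOf (HH B k j)) ≃*
        (↥(HH B k 0) ⧸ (JJ B k m 0).subgroupOf (HH B k 0)))) ?_ ?_ j hj0
    · intro _
      haveI := hnorm 0
      exact ⟨MulEquiv.refl _⟩
    · intro j hj ih hjl
      obtain ⟨hHeq, hJeq⟩ := parta (j + 1) (by omega) hjl
      rw [show j + 1 - 1 = j by ring] at hHeq hJeq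
      haveI := hnorm j
      haveI := hnorm (j + 1)
      obtain ⟨e⟩ := quot_iso_aux' hB1 hB2 (HH B k j) (JJ B k m j)
        (HH B k (j + 1)) (JJ B k m (j + 1)) (hJH j) (hHB j) (hconjJ j)
        (hker j hj (by omega)) hHeq hJeq
      obtain ⟨e0⟩ := ih (by omega)
      exact ⟨e.trans e0⟩
  refine ⟨parta, fun j hj0 hjl => ⟨hJH j, hnorm j⟩, ?_, ?_⟩
  · intro j j' hj0 hjl hj'0 hj'l
    refine ⟨hnorm j, hnorm j', ?_⟩
    intro i1 i2
    obtain ⟨e⟩ := key j hj0 hjl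
    obtain ⟨e'⟩ := key j' hj'0 hj'l
    exact ⟨e.trans e'.symm⟩
  · intro j hj0 hjl
    have hH0 : HH B k 0 = X B 0 ⊓ Y B k := by
      simp only [HH]
      rw [show (0 : ℤ) - 1 = -1 by ring, X_neg (by norm_num), bot_sup_eq,
        show k - (0 : ℤ) = k by ring]
    have hJ0 : JJ B k m 0 = X B 0 ⊓ Y B (k - m) := by
      simp only [JJ]
      rw [show (0 : ℤ) - 1 = -1 by ring, X_neg (by norm_num), bot_sup_eq,
        show k - (0 : ℤ) - m = k - m by ring]
    rw [← hH0, ← hJ0]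
    refine ⟨hnorm j, hnorm 0, ?_⟩
    intro i1 i2
    exact key j hj0 hjl


end GroupCodes
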